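/- For all complex numbers x, y and real numbers a, b: |x·e^{ia} + y·e^{-ia}|² + |x·e^{ib} + y·e^{-ib}|² ≥ (|x|² + |y|²)·sin²(a - b). -/

import Mathlib

open Complex in
private lemma stmt_5_key (x y : ℂ) (t : ℝ) :
    ‖x * exp (t * I) + y * exp (-(t * I))‖^2
      = ‖x‖^2 + ‖y‖^2 + 2 * (x * (starRingEnd ℂ) y * exp (((2*t : ℝ)) * I)).re := by
  have hconj : (starRingEnd ℂ) (exp (-(t * I))) = exp (t * I) := by
    rw [← Complex.exp_conj]; congr 1; simp
  have hmul : exp ((t:ℂ) * I) * exp ((t:ℂ) * I) = exp (((2*t : ℝ)) * I) := by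
    rw [← Complex.exp_add]; push_cast; ring_nf
  rw [
    Complex.sq_norm, Complex.sq_norm, Complex.sq_norm, Complex.normSq_add,
    Complex.normSq_mul, Complex.normSq_mul]
  rw [map_mul, hconj]
  have h1 : Complex.normSq (exp ((t:ℂ) * I)) = 1 := by
    rw [Complex.normSq_eq_norm_sq, Complex.norm_exp]; simp
  have h2 : Complex.normSq (exp (-((t:ℂ) * I))) = 1 := by
    rw [Complex.normSq_eq_norm_sq, Complex.norm_exp]; simp
  rw [h1, h2]
  have : x * exp ((t:ℂ) * I) * ((starRingEnd ℂ) y * exp ((t:ℂ) * I))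
      = x * (starRingEnd ℂ) y * exp (((2*t : ℝ)) * I) := by
    rw [← hmul]; ring
  rw [this]; ring

open Complex in
theorem stmt_5 (x y : ℂ) (a b : ℝ) :
    ‖x * exp (a * I) + y * exp (-(a * I))‖^2 + ‖x * exp (b * I) + y * exp (-(b * I))‖^2 ≥
      (‖x‖^2 + ‖y‖^2) * Real.sin (a - b) ^ 2 := by
  set z := x * (starRingEnd ℂ) y with hz
  set E := exp (((2*a : ℝ)) * I) + exp (((2*b : ℝ)) * I) with hE
  rw [stmt_5_key x y a, stmt_5_key x y b]
  have hre : (z * exp (((2*a : ℝ)) * I)).re + (z * exp (((2*b : ℝ)) * I)).re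
      = (z * E).re := by
    rw [hE, mul_add, Complex.add_re]
  -- norm of E
  have hEfact : E = exp (((a+b : ℝ)) * I) * ((2 * Real.cos (a - b) : ℝ) : ℂ) := by
    have h1 : exp (((2*a : ℝ)) * I) = exp (((a+b : ℝ)) * I) * exp (((a-b : ℝ)) * I) := by
      rw [← Complex.exp_add]; push_cast; ring_nf
    have h2 : exp (((2*b : ℝ)) * I) = exp (((a+b : ℝ)) * I) * exp ((-(a-b) : ℝ) * I) := by
      rw [← Complex.exp_add]; push_cast; ring_nf
    have h3 : exp (((a-b : ℝ)) * I) + exp ((-(a-b) : ℝ) * I) = ((2 * Real.cos (a - b) : ℝ) : ℂ) := by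
      rw [Complex.exp_mul_I, Complex.exp_mul_I]
      push_cast
      rw [Complex.cos_neg, Complex.sin_neg]
      ring
    rw [hE, h1, h2, ← mul_add, h3]
  have hEnorm : ‖E‖ = 2 * |Real.cos (a - b)| := by
    rw [hEfact, norm_mul, Complex.norm_exp, Complex.norm_real]
    simp [abs_mul]
  have hzb : (z * E).re ≥ -((‖x‖ * ‖y‖) * (2 * |Real.cos (a - b)|)) := by
    have h1 : -(‖z * E‖) ≤ (z * E).re := neg_abs_le _ |>.trans' (by
      have := Complex.abs_re_le_norm (z * E)
      have := neg_abs_le ((z * E).re)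
      linarith [abs_le.mp (le_refl |(z * E).re|)])
    have h2 : ‖z * E‖ = (‖x‖ * ‖y‖) * (2 * |Real.cos (a - b)|) := by
      rw [norm_mul, hEnorm, hz, norm_mul, Complex.norm_conj]
    linarith [h1, h2.ge, h2.le]
  rw [ge_iff_le]
  have hgoal := hzb
  have hsc : Real.sin (a - b) ^ 2 + Real.cos (a - b) ^ 2 = 1 := Real.sin_sq_add_cos_sq _
  have hx := norm_nonneg x
  have hy := norm_nonneg y
  have hc := abs_nonneg (Real.cos (a - b))
  have hc2 : |Real.cos (a - b)| ^ 2 = Real.cos (a - b) ^ 2 := sq_abs _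
  nlinarith [sq_nonneg (‖x‖ - ‖y‖), sq_nonneg (1 - |Real.cos (a - b)|),
    mul_nonneg (mul_nonneg hx hy) hc, sq_nonneg (‖x‖ + ‖y‖),
    mul_nonneg (sq_nonneg (‖x‖ - ‖y‖)) hc, mul_nonneg (sq_nonneg (1 - |Real.cos (a - b)|)) (add_nonneg (sq_nonneg ‖x‖) (sq_nonneg ‖y‖)), hre]
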